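/- Let G be a group, A a trivial G-module, n ≥ 1, ω an n-cocycle with values in A, (g_1,…,g_n) ∈ X_n(G) a commuting n-tuple, and k ∈ G. Then (k g_1 k^{−1}, …, k g_n k^{−1}) is again a commuting n-tuple and W_ω(k g_1 k^{−1}, …, k g_n k^{−1}) = W_ω(g_1,…,g_n); that is, the Dijkgraaf–Witten weight of a cocycle is invariant under simultaneous conjugation of the tuple. -/

import Mathlib

namespace DT

variable {G : Type*} [Group G] {A : Type*} [AddCommGroup A]

/-- Merge positions `i` and `i+1` of an `(n+1)`-tuple (bar-complex face map):
for `j < i` entry `g j`, at `j = i` entry `g i * g (i+1)`, for `j > i` entry `g (j+1)`. -/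
def barMerge {n : ℕ} (g : Fin (n+1) → G) (i : Fin n) : Fin n → G :=
  fun j => if (j : ℕ) < (i : ℕ) then g j.castSucc
    else if (j : ℕ) = (i : ℕ) then g j.castSucc * g j.succ
    else g j.succ

/-- The inhomogeneous (bar) coboundary of an `n`-cochain with values in a trivial module:
`(δω)(g_1,…,g_{n+1}) = ω(g_2,…,g_{n+1}) + Σ_{i=1}^{n} (−1)^i ω(g_1,…,g_i g_{i+1},…,g_{n+1})
 + (−1)^{n+1} ω(g_1,…,g_n)`. -/
def coboundary {n : ℕ} (ω : (Fin n → G) → A) : (Fin (n+1) → G) → A :=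
  fun g => ω (fun j => g j.succ)
    + ∑ i : Fin n, ((-1 : ℤ) ^ ((i : ℕ) + 1)) • ω (barMerge g i)
    + ((-1 : ℤ) ^ (n+1)) • ω (fun j => g j.castSucc)

/-- An `n`-cocycle. -/
def IsCocycle {n : ℕ} (ω : (Fin n → G) → A) : Prop := coboundary ω = 0

/-- An `(n+1)`-coboundary. -/
def IsCoboundary {n : ℕ} (ω : (Fin (n+1) → G) → A) : Prop := ∃ α, ω = coboundary α

/-- A commuting tuple. -/
def IsCommTuple {n : ℕ} (g : Fin n → G) : Prop := ∀ i j, g i * g j = g j * g i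

/-- The Dijkgraaf–Witten weight `W_ω(𝐠) = Σ_{σ ∈ S_n} sgn(σ) • ω(g_{σ(1)},…,g_{σ(n)})`. -/
def dwWeight {n : ℕ} (ω : (Fin n → G) → A) (g : Fin n → G) : A :=
  ∑ σ : Equiv.Perm (Fin n), ((Equiv.Perm.sign σ : ℤ)) • ω (g ∘ σ)

end DT

namespace DTAux

open DT

variable {G : Type*} [Group G]

def cidx (m : ℕ) (t : ℕ) : Fin (m+1) := ⟨t % (m+1), Nat.mod_lt t m.succ_pos⟩

lemma cidx_val {m t : ℕ} (h : t < m+1) : ((cidx m t : Fin (m+1)) : ℕ) = t :=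
  Nat.mod_eq_of_lt h

lemma cidx_eq {m : ℕ} (t : ℕ) (p : Fin (m+1)) (h : t = p.val) : cidx m t = p :=
  Fin.ext (by rw [cidx_val (by omega)]; omega)

def Hh (m : ℕ) (g : Fin (m+1) → G) (k : G) (σ : Equiv.Perm (Fin (m+1))) (i : Fin (m+2)) :
    Fin (m+2) → G :=
  fun q => if (q : ℕ) < (i : ℕ) then k * g (σ (cidx m q)) * k⁻¹
    else if (q : ℕ) = (i : ℕ) then k
    else g (σ (cidx m ((q : ℕ) - 1)))

variable {m : ℕ} (g : Fin (m+1) → G) (k : G) (σ : Equiv.Perm (Fin (m+1)))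

lemma E5 : (fun p : Fin (m+1) => Hh m g k σ 0 p.succ) = g ∘ σ := by
  funext p
  simp only [Hh, Fin.val_succ, Fin.val_zero, Function.comp_apply]
  split_ifs with h1 h2
  · omega
  · exact h2.elim
  · rw [show cidx m (↑p + 1 - 1) = p from cidx_eq _ _ (by omega)]

lemma E6 : (fun p : Fin (m+1) => Hh m g k σ (Fin.last (m+1)) p.castSucc)
    = (fun i => k * g i * k⁻¹) ∘ σ := by
  funext p
  simp only [Hh, Fin.coe_castSucc, Fin.val_last, Function.comp_apply]
  rw [if_pos (by omega), show cidx m (↑p) = p from cidx_eq _ _ rfl]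

end DTAux

namespace Part2
open DT DTAux
variable {G : Type*} [Group G] {m : ℕ} (g : Fin (m+1) → G) (k : G) (σ : Equiv.Perm (Fin (m+1)))

lemma bm_lt {n : ℕ} (f : Fin (n+1) → G) {i p : Fin n} (h : (p:ℕ) < (i:ℕ)) :
    barMerge f i p = f p.castSucc := if_pos h

lemma bm_eq {n : ℕ} (f : Fin (n+1) → G) {i p : Fin n} (h : (p:ℕ) = (i:ℕ)) :
    barMerge f i p = f p.castSucc * f p.succ := by
  simp only [barMerge]; rw [if_neg (by omega), if_pos h]

lemma bm_gt {n : ℕ} (f : Fin (n+1) → G) {i p : Fin n} (h : (i:ℕ) < (p:ℕ)) :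
    barMerge f i p = f p.succ := by
  simp only [barMerge]; rw [if_neg (by omega), if_neg (by omega)]

lemma Hh_lt {i q : Fin (m+2)} (h : (q:ℕ) < (i:ℕ)) :
    Hh m g k σ i q = k * g (σ (cidx m (q:ℕ))) * k⁻¹ := if_pos h

lemma Hh_eq {i q : Fin (m+2)} (h : (q:ℕ) = (i:ℕ)) : Hh m g k σ i q = k := by
  simp only [Hh]; rw [if_neg (by omega), if_pos h]

lemma Hh_gt {i q : Fin (m+2)} (h : (i:ℕ) < (q:ℕ)) :
    Hh m g k σ i q = g (σ (cidx m ((q:ℕ) - 1))) := by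
  simp only [Hh]; rw [if_neg (by omega), if_neg (by omega)]

lemma E1 (j : Fin (m+1)) :
    barMerge (Hh m g k σ j.castSucc) j = barMerge (Hh m g k σ j.succ) j := by
  funext p
  rcases lt_trichotomy (p:ℕ) (j:ℕ) with h | h | h
  · rw [bm_lt _ h, bm_lt _ h, Hh_lt g k σ (by simp only [Fin.coe_castSucc]; omega),
      Hh_lt g k σ (by simp only [Fin.coe_castSucc, Fin.val_succ]; omega)]
  · rw [bm_eq _ h, bm_eq _ h,
      Hh_eq g k σ (by simp only [Fin.coe_castSucc]; omega),
      Hh_gt g k σ (by simp only [Fin.coe_castSucc, Fin.val_succ]; omega),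
      Hh_lt g k σ (by simp only [Fin.coe_castSucc, Fin.val_succ]; omega),
      Hh_eq g k σ (by simp only [Fin.val_succ]; omega)]
    rw [show ((p.succ : Fin (m+2)):ℕ) - 1 = ((p.castSucc : Fin (m+2)):ℕ) by
      simp only [Fin.coe_castSucc, Fin.val_succ]; omega, inv_mul_cancel_right]
  · rw [bm_gt _ h, bm_gt _ h,
      Hh_gt g k σ (by simp only [Fin.coe_castSucc, Fin.val_succ]; omega),
      Hh_gt g k σ (by simp only [Fin.val_succ]; omega)]

end Part2

namespace Part3
open DT DTAux Part2
variable {G : Type*} [Group G] {m : ℕ} (g : Fin (m+1) → G) (k : G) (σ : Equiv.Perm (Fin (m+1)))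

lemma cidx_ne {m : ℕ} {s t : ℕ} (hs : s < m+1) (ht : t < m+1) (h : s ≠ t) :
    cidx m s ≠ cidx m t :=
  fun hc => h (by rw [← cidx_val hs, ← cidx_val ht, hc])

lemma swap_fix (a b : ℕ) (ha : a < m+1) (hb : b < m+1) :
    ∀ t : ℕ, t < m+1 → t ≠ a → t ≠ b →
      (σ * Equiv.swap (cidx m a) (cidx m b)) (cidx m t) = σ (cidx m t) := by
  intro t ht h1 h2
  rw [Equiv.Perm.mul_apply, Equiv.swap_apply_of_ne_of_ne (cidx_ne ht ha h1) (cidx_ne ht hb h2)]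

lemma conj_mul (a b : G) (hab : a * b = b * a) :
    (k*a*k⁻¹)*(k*b*k⁻¹) = (k*b*k⁻¹)*(k*a*k⁻¹) := by
  have h1 : ∀ x y : G, (k*x*k⁻¹)*(k*y*k⁻¹) = k*(x*y)*k⁻¹ := by intro x y; group
  rw [h1, h1, hab]

lemma E2 (hg : IsCommTuple g) (i : Fin (m+2)) (j : Fin (m+1)) (hij : (j:ℕ)+2 ≤ (i:ℕ)) :
    barMerge (Hh m g k σ i) j
      = barMerge (Hh m g k (σ * Equiv.swap (cidx m (j:ℕ)) (cidx m ((j:ℕ)+1))) i) j := by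
  have hi := i.isLt
  have hj := j.isLt
  funext p
  have hp := p.isLt
  rcases lt_trichotomy (p:ℕ) (j:ℕ) with h | h | h
  · rw [bm_lt _ h, bm_lt _ h, Hh_lt g k _ (by simp only [Fin.coe_castSucc]; omega),
      Hh_lt g k _ (by simp only [Fin.coe_castSucc]; omega),
      swap_fix σ _ _ (by omega) (by omega) _ (by simp only [Fin.coe_castSucc]; omega)
        (by simp only [Fin.coe_castSucc]; omega) (by simp only [Fin.coe_castSucc]; omega)]
  · rw [bm_eq _ h, bm_eq _ h, Hh_lt g k _ (by simp only [Fin.coe_castSucc]; omega),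
      Hh_lt g k _ (by simp only [Fin.val_succ]; omega),
      Hh_lt g k _ (by simp only [Fin.coe_castSucc]; omega),
      Hh_lt g k _ (by simp only [Fin.val_succ]; omega)]
    have e1 : cidx m ((p.castSucc : Fin (m+2)):ℕ) = cidx m (j:ℕ) := by
      simp only [Fin.coe_castSucc]; rw [h]
    have e2 : cidx m ((p.succ : Fin (m+2)):ℕ) = cidx m ((j:ℕ)+1) := by
      simp only [Fin.val_succ]; rw [h]
    rw [e1, e2, Equiv.Perm.mul_apply, Equiv.Perm.mul_apply, Equiv.swap_apply_left,
      Equiv.swap_apply_right]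
    exact conj_mul k _ _ (hg _ _)
  · rw [bm_gt _ h, bm_gt _ h]
    rcases lt_trichotomy ((p.succ : Fin (m+2)):ℕ) (i:ℕ) with h2 | h2 | h2
    · rw [Hh_lt g k _ h2, Hh_lt g k _ h2,
        swap_fix σ _ _ (by omega) (by omega) _ (by simp only [Fin.val_succ] at h2 ⊢; omega)
          (by simp only [Fin.val_succ] at h2 ⊢; omega)
          (by simp only [Fin.val_succ] at h2 ⊢; omega)]
    · rw [Hh_eq g k _ h2, Hh_eq g k _ h2]
    · rw [Hh_gt g k _ h2, Hh_gt g k _ h2,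
        swap_fix σ _ _ (by omega) (by omega) _ (by simp only [Fin.val_succ]; omega)
          (by simp only [Fin.val_succ] at h2 ⊢; omega)
          (by simp only [Fin.val_succ] at h2 ⊢; omega)]

lemma E3 (hg : IsCommTuple g) (i : Fin (m+2)) (j : Fin (m+1)) (hij : (i:ℕ)+1 ≤ (j:ℕ)) :
    barMerge (Hh m g k σ i) j
      = barMerge (Hh m g k (σ * Equiv.swap (cidx m ((j:ℕ)-1)) (cidx m (j:ℕ))) i) j := by
  have hi := i.isLt
  have hj := j.isLt
  funext p
  have hp := p.isLt
  rcases lt_trichotomy (p:ℕ) (j:ℕ) with h | h | h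
  · rw [bm_lt _ h, bm_lt _ h]
    rcases lt_trichotomy ((p.castSucc : Fin (m+2)):ℕ) (i:ℕ) with h2 | h2 | h2
    · rw [Hh_lt g k _ h2, Hh_lt g k _ h2,
        swap_fix σ _ _ (by omega) (by omega) _ (by simp only [Fin.coe_castSucc]; omega)
          (by simp only [Fin.coe_castSucc] at h2 ⊢; omega)
          (by simp only [Fin.coe_castSucc] at h2 ⊢; omega)]
    · rw [Hh_eq g k _ h2, Hh_eq g k _ h2]
    · rw [Hh_gt g k _ h2, Hh_gt g k _ h2,
        swap_fix σ _ _ (by omega) (by omega) _ (by simp only [Fin.coe_castSucc]; omega)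
          (by simp only [Fin.coe_castSucc] at h2 ⊢; omega)
          (by simp only [Fin.coe_castSucc] at h2 ⊢; omega)]
  · rw [bm_eq _ h, bm_eq _ h, Hh_gt g k _ (by simp only [Fin.coe_castSucc]; omega),
      Hh_gt g k _ (by simp only [Fin.val_succ]; omega),
      Hh_gt g k _ (by simp only [Fin.coe_castSucc]; omega),
      Hh_gt g k _ (by simp only [Fin.val_succ]; omega)]
    have e1 : cidx m (((p.castSucc : Fin (m+2)):ℕ) - 1) = cidx m ((j:ℕ)-1) := by
      simp only [Fin.coe_castSucc]; rw [h]
    have e2 : cidx m (((p.succ : Fin (m+2)):ℕ) - 1) = cidx m (j:ℕ) := by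
      simp only [Fin.val_succ]; rw [show (p:ℕ)+1-1 = (p:ℕ) by omega, h]
    rw [e1, e2, Equiv.Perm.mul_apply, Equiv.Perm.mul_apply, Equiv.swap_apply_left,
      Equiv.swap_apply_right]
    exact hg _ _
  · rw [bm_gt _ h, bm_gt _ h, Hh_gt g k _ (by simp only [Fin.val_succ]; omega),
      Hh_gt g k _ (by simp only [Fin.val_succ]; omega),
      swap_fix σ _ _ (by omega) (by omega) _ (by simp only [Fin.val_succ]; omega)
        (by simp only [Fin.val_succ]; omega) (by simp only [Fin.val_succ]; omega)]

lemma rot_cidx (t : ℕ) : (finRotate (m+1)) (cidx m t) = cidx m (t+1) := by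
  rw [finRotate_succ_apply]
  apply Fin.ext
  rw [Fin.val_add, Fin.val_one']
  exact (Nat.add_mod t 1 (m+1)).symm

lemma E4 (i : Fin (m+1)) :
    (fun p : Fin (m+1) => Hh m g k σ i.succ p.succ)
      = (fun p : Fin (m+1) => Hh m g k (σ * finRotate (m+1)) i.castSucc p.castSucc) := by
  funext p
  rcases lt_trichotomy (p:ℕ) (i:ℕ) with h | h | h
  · rw [Hh_lt g k _ (by simp only [Fin.val_succ]; omega),
      Hh_lt g k _ (by simp only [Fin.coe_castSucc]; omega), Equiv.Perm.mul_apply]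
    simp only [Fin.val_succ, Fin.coe_castSucc]
    rw [rot_cidx]
  · rw [Hh_eq g k _ (by simp only [Fin.val_succ]; omega),
      Hh_eq g k _ (by simp only [Fin.coe_castSucc]; omega)]
  · rw [Hh_gt g k _ (by simp only [Fin.val_succ]; omega),
      Hh_gt g k _ (by simp only [Fin.coe_castSucc]; omega), Equiv.Perm.mul_apply]
    simp only [Fin.val_succ, Fin.coe_castSucc]
    rw [rot_cidx, show (p:ℕ) - 1 + 1 = (p:ℕ) + 1 - 1 by omega]

end Part3

namespace Part4
open DT DTAux Part2 Part3

variable {G : Type*} [Group G] {A : Type*} [AddCommGroup A] {m : ℕ}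
variable (g : Fin (m+1) → G) (k : G)

def invo (m : ℕ) (G : Type*) [Group G] :
    Equiv.Perm (Fin (m+1)) × Fin (m+2) × Fin (m+1) →
      Equiv.Perm (Fin (m+1)) × Fin (m+2) × Fin (m+1) := fun x =>
  if h1 : ((x.2.2 : ℕ) = ((x.2.1 : Fin (m+2)) : ℕ)) then
    (x.1, ⟨((x.2.1 : Fin (m+2)) : ℕ)+1, by omega⟩, x.2.2)
  else if h2 : ((x.2.2 : ℕ)+1 = ((x.2.1 : Fin (m+2)) : ℕ)) then
    (x.1, ⟨((x.2.1 : Fin (m+2)) : ℕ)-1, by omega⟩, x.2.2)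
  else if h3 : ((x.2.2 : ℕ)+2 ≤ ((x.2.1 : Fin (m+2)) : ℕ)) then
    (x.1 * Equiv.swap (cidx m (x.2.2 : ℕ)) (cidx m ((x.2.2 : ℕ)+1)), x.2.1, x.2.2)
  else
    (x.1 * Equiv.swap (cidx m ((x.2.2 : ℕ)-1)) (cidx m (x.2.2 : ℕ)), x.2.1, x.2.2)

variable (σ : Equiv.Perm (Fin (m+1))) (i : Fin (m+2)) (j : Fin (m+1))

lemma invo_eq1 (h1 : (j:ℕ) = (i:ℕ)) :
    invo m G (σ, i, j) = (σ, ⟨(i:ℕ)+1, by omega⟩, j) := by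
  unfold invo; dsimp only; rw [dif_pos h1]

lemma invo_eq2 (h2 : (j:ℕ)+1 = (i:ℕ)) :
    invo m G (σ, i, j) = (σ, ⟨(i:ℕ)-1, by omega⟩, j) := by
  unfold invo; dsimp only; rw [dif_neg (by omega), dif_pos h2]

lemma invo_eq3 (h3 : (j:ℕ)+2 ≤ (i:ℕ)) :
    invo m G (σ, i, j) = (σ * Equiv.swap (cidx m (j:ℕ)) (cidx m ((j:ℕ)+1)), i, j) := by
  unfold invo; dsimp only; rw [dif_neg (by omega), dif_neg (by omega), dif_pos h3]

lemma invo_eq4 (h4 : (i:ℕ)+1 ≤ (j:ℕ)) :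
    invo m G (σ, i, j) = (σ * Equiv.swap (cidx m ((j:ℕ)-1)) (cidx m (j:ℕ)), i, j) := by
  unfold invo; dsimp only; rw [dif_neg (by omega), dif_neg (by omega), dif_neg (by omega)]

lemma invo_invo (x : Equiv.Perm (Fin (m+1)) × Fin (m+2) × Fin (m+1)) :
    invo m G (invo m G x) = x := by
  obtain ⟨σ, i, j⟩ := x
  have hi := i.isLt
  have hj := j.isLt
  by_cases h1 : (j:ℕ) = (i:ℕ)
  · rw [invo_eq1 σ i j h1, invo_eq2 σ ⟨(i:ℕ)+1, by omega⟩ j (show (j:ℕ)+1 = (i:ℕ)+1 by omega)]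
    simp only [Prod.mk.injEq]
    exact ⟨trivial, Fin.ext (show (i:ℕ)+1-1 = (i:ℕ) by omega), trivial⟩
  · by_cases h2 : (j:ℕ)+1 = (i:ℕ)
    · rw [invo_eq2 σ i j h2, invo_eq1 σ ⟨(i:ℕ)-1, by omega⟩ j (show (j:ℕ) = (i:ℕ)-1 by omega)]
      simp only [Prod.mk.injEq]
      exact ⟨trivial, Fin.ext (show (i:ℕ)-1+1 = (i:ℕ) by omega), trivial⟩
    · by_cases h3 : (j:ℕ)+2 ≤ (i:ℕ)
      · rw [invo_eq3 σ i j h3, invo_eq3 _ i j h3, mul_assoc, Equiv.swap_mul_self, mul_one]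
      · have h4 : (i:ℕ)+1 ≤ (j:ℕ) := by omega
        rw [invo_eq4 σ i j h4, invo_eq4 _ i j h4, mul_assoc, Equiv.swap_mul_self, mul_one]

lemma invo_ne (x : Equiv.Perm (Fin (m+1)) × Fin (m+2) × Fin (m+1)) :
    invo m G x ≠ x := by
  obtain ⟨σ, i, j⟩ := x
  have hi := i.isLt
  have hj := j.isLt
  by_cases h1 : (j:ℕ) = (i:ℕ)
  · rw [invo_eq1 σ i j h1]
    intro h
    have := congrArg (fun y => ((y.2.1 : Fin (m+2)) : ℕ)) h
    simp only at this
    omega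
  · by_cases h2 : (j:ℕ)+1 = (i:ℕ)
    · rw [invo_eq2 σ i j h2]
      intro h
      have := congrArg (fun y => ((y.2.1 : Fin (m+2)) : ℕ)) h
      simp only at this
      omega
    · by_cases h3 : (j:ℕ)+2 ≤ (i:ℕ)
      · rw [invo_eq3 σ i j h3]
        intro h
        have hswap : Equiv.swap (cidx m (j:ℕ)) (cidx m ((j:ℕ)+1)) = 1 :=
          mul_eq_left.mp (congrArg Prod.fst h)
        exact cidx_ne (by omega) (by omega) (by omega)
          (Equiv.swap_eq_one_iff.mp hswap)
      · have h4 : (i:ℕ)+1 ≤ (j:ℕ) := by omega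
        rw [invo_eq4 σ i j h4]
        intro h
        have hswap : Equiv.swap (cidx m ((j:ℕ)-1)) (cidx m (j:ℕ)) = 1 :=
          mul_eq_left.mp (congrArg Prod.fst h)
        exact cidx_ne (by omega) (by omega) (by omega)
          (Equiv.swap_eq_one_iff.mp hswap)

end Part4

namespace Part5
open DT DTAux Part2 Part3 Part4

variable {G : Type*} [Group G] {A : Type*} [AddCommGroup A] {m : ℕ}

lemma smul_cancel (c d : ℤ) (v : A) (h : c + d = 0) : c • v + d • v = 0 := by
  rw [← add_smul, h, zero_smul]

variable (g : Fin (m+1) → G) (k : G) (σ : Equiv.Perm (Fin (m+1)))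
variable (ω : (Fin (m+1) → G) → A)

/-- The term of the middle (merge) part of the big sum. -/
def Fm : Equiv.Perm (Fin (m+1)) × Fin (m+2) × Fin (m+1) → A := fun x =>
  (((Equiv.Perm.sign x.1 : ℤ)) * (-1)^((x.2.1 : Fin (m+2)) : ℕ) * (-1)^(((x.2.2 : Fin (m+1)) : ℕ)+1)) •
    ω (barMerge (Hh m g k x.1 (x.2.1 : Fin (m+2))) x.2.2)

lemma pair1 (j : Fin (m+1)) (i i' : Fin (m+2)) (h1 : (j:ℕ) = (i:ℕ)) (h2 : (i':ℕ) = (i:ℕ)+1) :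
    Fm g k ω (σ, i, j) + Fm g k ω (σ, i', j) = 0 := by
  have hj := j.isLt
  have e1 : i = j.castSucc := Fin.ext (by simp only [Fin.coe_castSucc]; omega)
  have e2 : i' = j.succ := Fin.ext (by simp only [Fin.val_succ]; omega)
  subst e1; subst e2
  unfold Fm; dsimp only
  rw [E1 g k σ j]
  refine smul_cancel _ _ _ ?_
  simp only [Fin.coe_castSucc, Fin.val_succ]
  ring

lemma pair3 (hg : IsCommTuple g) (i : Fin (m+2)) (j : Fin (m+1)) (h3 : (j:ℕ)+2 ≤ (i:ℕ)) :
    Fm g k ω (σ, i, j) + Fm g k ω (σ * Equiv.swap (cidx m (j:ℕ)) (cidx m ((j:ℕ)+1)), i, j) = 0 := by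
  have hi := i.isLt
  unfold Fm; dsimp only
  rw [← E2 g k σ hg i j h3]
  have hs : ((Equiv.Perm.sign (σ * Equiv.swap (cidx m (j:ℕ)) (cidx m ((j:ℕ)+1))) : ℤ))
      = -((Equiv.Perm.sign σ : ℤ)) := by
    rw [Equiv.Perm.sign_mul, Equiv.Perm.sign_swap (cidx_ne (by omega) (by omega) (by omega))]
    simp
  rw [hs]
  exact smul_cancel _ _ _ (by ring)

lemma pair4 (hg : IsCommTuple g) (i : Fin (m+2)) (j : Fin (m+1)) (h4 : (i:ℕ)+1 ≤ (j:ℕ)) :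
    Fm g k ω (σ, i, j) + Fm g k ω (σ * Equiv.swap (cidx m ((j:ℕ)-1)) (cidx m (j:ℕ)), i, j) = 0 := by
  have hj := j.isLt
  unfold Fm; dsimp only
  rw [← E3 g k σ hg i j h4]
  have hs : ((Equiv.Perm.sign (σ * Equiv.swap (cidx m ((j:ℕ)-1)) (cidx m (j:ℕ))) : ℤ))
      = -((Equiv.Perm.sign σ : ℤ)) := by
    rw [Equiv.Perm.sign_mul, Equiv.Perm.sign_swap (cidx_ne (by omega) (by omega) (by omega))]
    simp
  rw [hs]
  exact smul_cancel _ _ _ (by ring)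

lemma TY_zero (hg : IsCommTuple g) :
    ∑ x : Equiv.Perm (Fin (m+1)) × Fin (m+2) × Fin (m+1), Fm g k ω x = 0 := by
  refine Finset.sum_involution (fun x _ => invo m G x) ?_
    (fun x _ _ => invo_ne x) (fun x _ => Finset.mem_univ _) (fun x _ => invo_invo x)
  rintro ⟨σ, i, j⟩ -
  show Fm g k ω (σ, i, j) + Fm g k ω (invo m G (σ, i, j)) = 0
  have hi := i.isLt
  have hj := j.isLt
  by_cases h1 : (j:ℕ) = (i:ℕ)
  · rw [invo_eq1 σ i j h1]
    exact pair1 g k σ ω j i ⟨(i:ℕ)+1, by omega⟩ h1 rfl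
  · by_cases h2 : (j:ℕ)+1 = (i:ℕ)
    · rw [invo_eq2 σ i j h2, add_comm]
      exact pair1 g k σ ω j ⟨(i:ℕ)-1, by omega⟩ i (show (j:ℕ) = (i:ℕ)-1 by omega)
        (show (i:ℕ) = (i:ℕ)-1+1 by omega)
    · by_cases h3 : (j:ℕ)+2 ≤ (i:ℕ)
      · rw [invo_eq3 σ i j h3]
        exact pair3 g k σ ω hg i j h3
      · have h4 : (i:ℕ)+1 ≤ (j:ℕ) := by omega
        rw [invo_eq4 σ i j h4]
        exact pair4 g k σ ω hg i j h4

lemma hsign_rot : ((Equiv.Perm.sign (σ * finRotate (m+1)) : ℤ))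
    = ((Equiv.Perm.sign σ : ℤ)) * (-1)^m := by
  rw [Equiv.Perm.sign_mul, sign_finRotate]
  push_cast
  ring

lemma SUSV :
    (∑ σ : Equiv.Perm (Fin (m+1)), ∑ i : Fin (m+1),
      (((Equiv.Perm.sign σ : ℤ)) * (-1)^((i:ℕ)+1)) • ω (fun p => Hh m g k σ i.succ p.succ))
    + (∑ σ : Equiv.Perm (Fin (m+1)), ∑ i : Fin (m+1),
      (((Equiv.Perm.sign σ : ℤ)) * (-1)^((i:ℕ)) * (-1)^(m+1+1)) •
        ω (fun p => Hh m g k σ i.castSucc p.castSucc)) = 0 := by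
  have key : ∀ (σ : Equiv.Perm (Fin (m+1))) (i : Fin (m+1)),
      (((Equiv.Perm.sign σ : ℤ)) * (-1)^((i:ℕ)+1)) • ω (fun p => Hh m g k σ i.succ p.succ)
      = -((((Equiv.Perm.sign (σ * finRotate (m+1)) : ℤ)) * (-1)^((i:ℕ)) * (-1)^(m+1+1)) •
          ω (fun p => Hh m g k (σ * finRotate (m+1)) i.castSucc p.castSucc)) := by
    intro σ i
    rw [← E4 g k σ i, hsign_rot, ← neg_smul]
    congr 1
    have h12 : (-1:ℤ)^m * (-1:ℤ)^(m+1+1) = 1 := by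
      rw [← pow_add]; exact Even.neg_one_pow ⟨m+1, by ring⟩
    linear_combination (((Equiv.Perm.sign σ : ℤ)) * (-1:ℤ)^((i:ℕ))) * h12
  rw [show (∑ σ : Equiv.Perm (Fin (m+1)), ∑ i : Fin (m+1),
      (((Equiv.Perm.sign σ : ℤ)) * (-1)^((i:ℕ)+1)) • ω (fun p => Hh m g k σ i.succ p.succ))
    = ∑ σ : Equiv.Perm (Fin (m+1)), -(∑ i : Fin (m+1),
      (((Equiv.Perm.sign (σ * finRotate (m+1)) : ℤ)) * (-1)^((i:ℕ)) * (-1)^(m+1+1)) •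
        ω (fun p => Hh m g k (σ * finRotate (m+1)) i.castSucc p.castSucc)) from
    Finset.sum_congr rfl fun σ _ => by
      rw [← Finset.sum_neg_distrib]
      exact Finset.sum_congr rfl fun i _ => key σ i]
  rw [show (∑ σ : Equiv.Perm (Fin (m+1)), -(∑ i : Fin (m+1),
      (((Equiv.Perm.sign (σ * finRotate (m+1)) : ℤ)) * (-1)^((i:ℕ)) * (-1)^(m+1+1)) •
        ω (fun p => Hh m g k (σ * finRotate (m+1)) i.castSucc p.castSucc)))
    = ∑ σ : Equiv.Perm (Fin (m+1)), -(∑ i : Fin (m+1),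
      (((Equiv.Perm.sign σ : ℤ)) * (-1)^((i:ℕ)) * (-1)^(m+1+1)) •
        ω (fun p => Hh m g k σ i.castSucc p.castSucc)) from
    Fintype.sum_bijective (· * finRotate (m+1)) (Group.mulRight_bijective _) _ _
      (fun σ => rfl)]
  rw [Finset.sum_neg_distrib]
  exact neg_add_cancel _

end Part5

open DT in
/-- the DW weight of a cocycle is invariant under simultaneous conjugation
of the commuting tuple. -/
theorem stmt1 {G : Type*} [Group G] {A : Type*} [AddCommGroup A] (m : ℕ)
    (ω : (Fin (m+1) → G) → A) (hω : IsCocycle ω)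
    (g : Fin (m+1) → G) (hg : IsCommTuple g) (k : G) :
    IsCommTuple (fun i => k * g i * k⁻¹) ∧
    dwWeight ω (fun i => k * g i * k⁻¹) = dwWeight ω g := by
  constructor
  · intro i j
    have h1 : ∀ x y : G, (k*x*k⁻¹)*(k*y*k⁻¹) = k*(x*y)*k⁻¹ := by intro x y; group
    show (k * g i * k⁻¹) * (k * g j * k⁻¹) = (k * g j * k⁻¹) * (k * g i * k⁻¹)
    rw [h1, h1, hg i j]
  · open DTAux Part2 Part3 Part4 Part5 in
    have h0 : coboundary ω = (0 : (Fin (m+1+1) → G) → A) := hω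
    have hS : (0:A) = ∑ σ : Equiv.Perm (Fin (m+1)), ∑ i : Fin (m+2),
        (((Equiv.Perm.sign σ : ℤ)) * (-1)^((i:ℕ))) • coboundary ω (Hh m g k σ i) := by
      simp [h0]
    have hexp : ∀ (σ : Equiv.Perm (Fin (m+1))) (i : Fin (m+2)),
        (((Equiv.Perm.sign σ : ℤ)) * (-1)^((i:ℕ))) • coboundary ω (Hh m g k σ i)
        = (((Equiv.Perm.sign σ : ℤ)) * (-1)^((i:ℕ))) • ω (fun p => Hh m g k σ i p.succ)
          + (∑ j : Fin (m+1), (((Equiv.Perm.sign σ : ℤ)) * (-1)^((i:ℕ)) * (-1)^((j:ℕ)+1)) •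
              ω (barMerge (Hh m g k σ i) j))
          + (((Equiv.Perm.sign σ : ℤ)) * (-1)^((i:ℕ)) * (-1)^(m+1+1)) •
              ω (fun p => Hh m g k σ i p.castSucc) := by
      intro σ i
      simp only [coboundary]
      rw [smul_add, smul_add, Finset.smul_sum]
      simp only [smul_smul]
    have hS2 : (0:A) =
        (∑ σ : Equiv.Perm (Fin (m+1)), ∑ i : Fin (m+2),
          (((Equiv.Perm.sign σ : ℤ)) * (-1)^((i:ℕ))) • ω (fun p => Hh m g k σ i p.succ))
        + (∑ σ : Equiv.Perm (Fin (m+1)), ∑ i : Fin (m+2), ∑ j : Fin (m+1),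
          (((Equiv.Perm.sign σ : ℤ)) * (-1)^((i:ℕ)) * (-1)^((j:ℕ)+1)) •
            ω (barMerge (Hh m g k σ i) j))
        + (∑ σ : Equiv.Perm (Fin (m+1)), ∑ i : Fin (m+2),
          (((Equiv.Perm.sign σ : ℤ)) * (-1)^((i:ℕ)) * (-1)^(m+1+1)) •
            ω (fun p => Hh m g k σ i p.castSucc)) := by
      rw [hS]
      simp only [hexp]
      simp only [Finset.sum_add_distrib]
    have hTY : (∑ σ : Equiv.Perm (Fin (m+1)), ∑ i : Fin (m+2), ∑ j : Fin (m+1),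
        (((Equiv.Perm.sign σ : ℤ)) * (-1)^((i:ℕ)) * (-1)^((j:ℕ)+1)) •
          ω (barMerge (Hh m g k σ i) j)) = 0 := by
      have hconv : (∑ σ : Equiv.Perm (Fin (m+1)), ∑ i : Fin (m+2), ∑ j : Fin (m+1),
          (((Equiv.Perm.sign σ : ℤ)) * (-1)^((i:ℕ)) * (-1)^((j:ℕ)+1)) •
            ω (barMerge (Hh m g k σ i) j))
          = ∑ x : Equiv.Perm (Fin (m+1)) × Fin (m+2) × Fin (m+1), Fm g k ω x := by
        rw [Fintype.sum_prod_type]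
        refine Finset.sum_congr rfl fun σ _ => ?_
        rw [Fintype.sum_prod_type]
        rfl
      rw [hconv]
      exact TY_zero g k ω hg
    have hTX : (∑ σ : Equiv.Perm (Fin (m+1)), ∑ i : Fin (m+2),
        (((Equiv.Perm.sign σ : ℤ)) * (-1)^((i:ℕ))) • ω (fun p => Hh m g k σ i p.succ))
      = dwWeight ω g + (∑ σ : Equiv.Perm (Fin (m+1)), ∑ i : Fin (m+1),
        (((Equiv.Perm.sign σ : ℤ)) * (-1)^((i:ℕ)+1)) • ω (fun p => Hh m g k σ i.succ p.succ)) := by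
      rw [show (∑ σ : Equiv.Perm (Fin (m+1)), ∑ i : Fin (m+2),
          (((Equiv.Perm.sign σ : ℤ)) * (-1)^((i:ℕ))) • ω (fun p => Hh m g k σ i p.succ))
        = ∑ σ : Equiv.Perm (Fin (m+1)),
          ((((Equiv.Perm.sign σ : ℤ)) * (-1)^(((0: Fin (m+2)):ℕ))) •
              ω (fun p => Hh m g k σ 0 p.succ)
            + ∑ i : Fin (m+1), (((Equiv.Perm.sign σ : ℤ)) * (-1)^((i.succ : ℕ))) •
              ω (fun p => Hh m g k σ i.succ p.succ)) from
        Finset.sum_congr rfl fun σ _ => Fin.sum_univ_succ _]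
      rw [Finset.sum_add_distrib]
      congr 1
      · simp only [dwWeight]
        refine Finset.sum_congr rfl fun σ _ => ?_
        rw [E5 g k σ]
        simp only [Fin.val_zero, pow_zero, mul_one]
    have hTZ : (∑ σ : Equiv.Perm (Fin (m+1)), ∑ i : Fin (m+2),
        (((Equiv.Perm.sign σ : ℤ)) * (-1)^((i:ℕ)) * (-1)^(m+1+1)) •
          ω (fun p => Hh m g k σ i p.castSucc))
      = (∑ σ : Equiv.Perm (Fin (m+1)), ∑ i : Fin (m+1),
        (((Equiv.Perm.sign σ : ℤ)) * (-1)^((i:ℕ)) * (-1)^(m+1+1)) •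
          ω (fun p => Hh m g k σ i.castSucc p.castSucc))
        + -(dwWeight ω (fun i => k * g i * k⁻¹)) := by
      rw [show (∑ σ : Equiv.Perm (Fin (m+1)), ∑ i : Fin (m+2),
          (((Equiv.Perm.sign σ : ℤ)) * (-1)^((i:ℕ)) * (-1)^(m+1+1)) •
            ω (fun p => Hh m g k σ i p.castSucc))
        = ∑ σ : Equiv.Perm (Fin (m+1)),
          ((∑ i : Fin (m+1), (((Equiv.Perm.sign σ : ℤ)) * (-1)^((i.castSucc : ℕ)) * (-1)^(m+1+1)) •
              ω (fun p => Hh m g k σ i.castSucc p.castSucc))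
            + (((Equiv.Perm.sign σ : ℤ)) * (-1)^((Fin.last (m+1) : ℕ)) * (-1)^(m+1+1)) •
              ω (fun p => Hh m g k σ (Fin.last (m+1)) p.castSucc)) from
        Finset.sum_congr rfl fun σ _ => Fin.sum_univ_castSucc _]
      rw [Finset.sum_add_distrib]
      congr 1
      · simp only [dwWeight]
        rw [← Finset.sum_neg_distrib]
        refine Finset.sum_congr rfl fun σ _ => ?_
        rw [E6 g k σ, ← neg_smul]
        congr 1
        simp only [Fin.val_last]
        have h12 : (-1:ℤ)^(m+1) * (-1:ℤ)^(m+1+1) = -1 := by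
          rw [← pow_add]; exact Odd.neg_one_pow ⟨m+1, by ring⟩
        linear_combination ((Equiv.Perm.sign σ : ℤ)) * h12
    have hfin := SUSV g k ω
    rw [hTX, hTY, hTZ] at hS2
    calc dwWeight ω (fun i => k * g i * k⁻¹)
        = dwWeight ω (fun i => k * g i * k⁻¹)
          + ((dwWeight ω g + (∑ σ : Equiv.Perm (Fin (m+1)), ∑ i : Fin (m+1),
              (((Equiv.Perm.sign σ : ℤ)) * (-1)^((i:ℕ)+1)) •
                ω (fun p => Hh m g k σ i.succ p.succ)))
            + 0
            + ((∑ σ : Equiv.Perm (Fin (m+1)), ∑ i : Fin (m+1),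
              (((Equiv.Perm.sign σ : ℤ)) * (-1)^((i:ℕ)) * (-1)^(m+1+1)) •
                ω (fun p => Hh m g k σ i.castSucc p.castSucc))
              + -(dwWeight ω (fun i => k * g i * k⁻¹)))) := by
          rw [← hS2, add_zero]
      _ = dwWeight ω g
          + ((∑ σ : Equiv.Perm (Fin (m+1)), ∑ i : Fin (m+1),
              (((Equiv.Perm.sign σ : ℤ)) * (-1)^((i:ℕ)+1)) •
                ω (fun p => Hh m g k σ i.succ p.succ))
            + (∑ σ : Equiv.Perm (Fin (m+1)), ∑ i : Fin (m+1),
              (((Equiv.Perm.sign σ : ℤ)) * (-1)^((i:ℕ)) * (-1)^(m+1+1)) •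
                ω (fun p => Hh m g k σ i.castSucc p.castSucc))) := by
          abel
      _ = dwWeight ω g := by rw [hfin, add_zero]
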